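/- arXiv:1406.2541 — 2 statements merged into one kernel-verified Lean document; each statement's English description precedes it below -/
import Mathlib

section
/- If b is uniformly distributed on [0, 2π] and x, x', w are fixed real vectors, then 2·E_b[cos(wᵀx + b)·cos(wᵀx' + b)] = cos(wᵀ(x - x')). -/
open Real Matrix

lemma cos_mul_cos_aux (u v b : ℝ) :
    Real.cos (u + b) * Real.cos (v + b)
      = (Real.cos (u - v) + Real.cos ((u + v) + 2 * b)) / 2 := by
  have h1 := Real.cos_sq_add_sin_sq b
  rw [Real.cos_add u b, Real.cos_add v b, Real.cos_sub,
    Real.cos_add (u + v) (2 * b), Real.cos_add u v, Real.sin_add u v,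
    Real.cos_two_mul, Real.sin_two_mul]
  linear_combination Real.sin u * Real.sin v * h1

lemma integral_cos_shift (c : ℝ) :
    ∫ b in (0 : ℝ)..(2 * Real.pi), Real.cos (c + 2 * b) = 0 := by
  have h : ∀ b : ℝ, Real.cos (c + 2 * b) = Real.cos (2 * b + c) := fun b => by ring_nf
  simp_rw [h]
  rw [intervalIntegral.integral_comp_mul_add Real.cos (by norm_num : (2:ℝ) ≠ 0) c]
  simp [Real.sin_add, Real.cos_add, mul_comm]
  ring_nf
  have hs : Real.sin (Real.pi * 4) = 0 := by
    rw [show Real.pi * 4 = (4 : ℕ) * Real.pi by push_cast; ring]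
    exact Real.sin_nat_mul_pi 4
  have hc : Real.cos (Real.pi * 4) = 1 := by
    rw [show Real.pi * 4 = (2 : ℕ) * (2 * Real.pi) by push_cast; ring]
    exact Real.cos_nat_mul_two_pi 2
  rw [hs, hc]; ring

/-- If `b ~ Uniform[0, 2π]` and `x, x', w` are fixed vectors, then
`2 E_b[cos(wᵀx + b) cos(wᵀx' + b)] = cos(wᵀ(x - x'))`. -/
theorem two_expectation_cos_cos {d : ℕ} (w x x' : Fin d → ℝ) :
    2 * ((2 * Real.pi)⁻¹ *
        ∫ b in (0 : ℝ)..(2 * Real.pi),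
          Real.cos (w ⬝ᵥ x + b) * Real.cos (w ⬝ᵥ x' + b)) =
      Real.cos (w ⬝ᵥ (x - x')) := by
  set u := w ⬝ᵥ x
  set v := w ⬝ᵥ x'
  have hsub : w ⬝ᵥ (x - x') = u - v := by
    simp [dotProduct, Finset.sum_sub_distrib, mul_sub, u, v]
  simp_rw [cos_mul_cos_aux u v]
  rw [intervalIntegral.integral_div]
  rw [intervalIntegral.integral_add (Continuous.intervalIntegrable (by continuity) _ _) (Continuous.intervalIntegrable (by continuity) _ _)]
  rw [integral_cos_shift, intervalIntegral.integral_const, hsub]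
  have hpi : Real.pi ≠ 0 := Real.pi_ne_zero
  field_simp
  rw [sub_zero, smul_eq_mul, add_zero]
end

section
/- If f ~ N(m, V) is bivariate Gaussian with f = (f₁, f₂), then the conditional variance of f₁ given the event {f₁ < f₂} equals V₁₁ - s^{-1}·β·(β + α)·(V₁₁ - V₁₂)², where s = V₁₁ - 2V₁₂ + V₂₂ > 0, μ = m₂ - m₁, α = μ/√s, and β = φ(α)/Φ(α), with φ and Φ the standard Gaussian pdf and cdf. -/
open MeasureTheory Real Matrix

/-- Multivariate Gaussian density `N(z | m, V)` on `ι → ℝ`. -/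
noncomputable def mgauss {ι : Type*} [Fintype ι] [DecidableEq ι]
    (m : ι → ℝ) (V : Matrix ι ι ℝ) (z : ι → ℝ) : ℝ :=
  (Real.sqrt ((2 * Real.pi) ^ (Fintype.card ι) * V.det))⁻¹ *
    Real.exp (-(1 / 2) * ((z - m) ⬝ᵥ (V⁻¹ *ᵥ (z - m))))

/-- Standard Gaussian pdf. -/
noncomputable def stdNormalPdf (x : ℝ) : ℝ :=
  (Real.sqrt (2 * Real.pi))⁻¹ * Real.exp (-x ^ 2 / 2)

/-- Standard Gaussian cdf. -/
noncomputable def stdNormalCdf (a : ℝ) : ℝ :=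
  ∫ x in Set.Iic a, stdNormalPdf x

open Filter Set

section Aux1D

lemma tendsto_mul_exp_neg_sq {c : ℝ} (hc : 0 < c) :
    Tendsto (fun x : ℝ => x * Real.exp (-c * x ^ 2)) atTop (nhds 0) := by
  have h1 : Tendsto (fun y : ℝ => y * Real.exp (-y)) atTop (nhds 0) := by
    simpa using Real.tendsto_pow_mul_exp_neg_atTop_nhds_zero 1
  have h2 : Tendsto (fun x : ℝ => c * x ^ 2) atTop atTop := by
    exact (tendsto_pow_atTop (two_ne_zero)).const_mul_atTop hc
  have h3 : Tendsto (fun x : ℝ => (c * x ^ 2) * Real.exp (-(c * x ^ 2))) atTop (nhds 0) :=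
    h1.comp h2
  have h4 : Tendsto (fun x : ℝ => (1/c) * ((c * x ^ 2) * Real.exp (-(c * x ^ 2)))) atTop
      (nhds 0) := by simpa using h3.const_mul (1/c)
  apply squeeze_zero_norm' _ h4
  filter_upwards [eventually_ge_atTop (1:ℝ)] with x hx
  have hx0 : (0:ℝ) ≤ x := le_trans zero_le_one hx
  have : x ≤ x ^ 2 := by nlinarith
  have he : (0:ℝ) < Real.exp (-c * x ^ 2) := Real.exp_pos _
  rw [Real.norm_eq_abs, abs_of_nonneg (by positivity)]
  have : x * Real.exp (-c * x ^ 2) ≤ x ^ 2 * Real.exp (-c * x ^ 2) := by nlinarith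
  calc x * Real.exp (-c * x ^ 2) ≤ x ^ 2 * Real.exp (-c * x ^ 2) := this
    _ = (1/c) * ((c * x ^ 2) * Real.exp (-(c * x ^ 2))) := by
        field_simp

lemma tendsto_mul_exp_neg_sq_atBot {c : ℝ} (hc : 0 < c) :
    Tendsto (fun x : ℝ => x * Real.exp (-c * x ^ 2)) atBot (nhds 0) := by
  have h := ((tendsto_mul_exp_neg_sq hc).comp tendsto_neg_atBot_atTop).neg
  rw [neg_zero] at h
  refine h.congr fun x => ?_
  simp [Function.comp, neg_sq]

lemma integrable_sq_mul_exp_neg_sq {c : ℝ} (hc : 0 < c) :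
    Integrable (fun x : ℝ => x ^ 2 * Real.exp (-c * x ^ 2)) := by
  have hbase : Integrable (fun x : ℝ => (2/c) * Real.exp (-(c/2) * x ^ 2)) :=
    (integrable_exp_neg_mul_sq (by linarith)).const_mul _
  apply hbase.mono'
  · apply Continuous.aestronglyMeasurable; continuity
  · filter_upwards with x
    rw [Real.norm_eq_abs, abs_of_nonneg (by positivity)]
    have key : (c/2) * x ^ 2 ≤ Real.exp ((c/2) * x ^ 2) := by
      nlinarith [Real.add_one_le_exp ((c/2) * x ^ 2), sq_nonneg x]
    have h1 : Real.exp (-c * x ^ 2) = Real.exp (-(c/2) * x^2) * Real.exp (-(c/2) * x^2) := by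
      rw [← Real.exp_add]; ring_nf
    rw [h1]
    have he := Real.exp_pos (-(c/2) * x^2)
    have hb : x ^ 2 ≤ (2/c) * Real.exp ((c/2) * x^2) := by
      have h3 := mul_le_mul_of_nonneg_left key (le_of_lt (by positivity : (0:ℝ) < 2/c))
      calc x ^ 2 = (2/c) * ((c/2) * x ^ 2) := by field_simp
        _ ≤ (2/c) * Real.exp ((c/2) * x^2) := h3
    have h2 : x ^ 2 * Real.exp (-(c/2) * x^2) ≤ 2/c := by
      calc x ^ 2 * Real.exp (-(c/2) * x^2)
          ≤ ((2/c) * Real.exp ((c/2) * x^2)) * Real.exp (-(c/2) * x^2) :=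
            mul_le_mul_of_nonneg_right hb he.le
        _ = (2/c) * Real.exp ((c/2) * x^2 + -(c/2) * x^2) := by rw [mul_assoc, ← Real.exp_add]
        _ = 2/c := by norm_num
    nlinarith [mul_le_mul_of_nonneg_right h2 he.le]

lemma integral_mul_exp_neg_sq {c : ℝ} (hc : 0 < c) :
    ∫ x : ℝ, x * Real.exp (-c * x ^ 2) = 0 := by
  have h1 : ∀ x : ℝ, HasDerivAt (fun y : ℝ => -(1/(2*c)) * Real.exp (-c * y ^ 2))
      (x * Real.exp (-c * x ^ 2)) x := by
    intro x
    have : HasDerivAt (fun y : ℝ => -c * y ^ 2) (-c * (2 * x)) x := by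
      simpa using ((hasDerivAt_pow 2 x).const_mul (-c))
    have h := (this.exp).const_mul (-(1/(2*c)))
    refine h.congr_deriv ?_
    field_simp
  have hint : Integrable (fun x : ℝ => x * Real.exp (-c * x ^ 2)) :=
    integrable_mul_exp_neg_mul_sq hc
  have htop : Tendsto (fun y : ℝ => -(1/(2*c)) * Real.exp (-c * y ^ 2)) atTop (nhds 0) := by
    have : Tendsto (fun y : ℝ => Real.exp (-c * y ^ 2)) atTop (nhds 0) := by
      apply Real.tendsto_exp_atBot.comp
      have : Tendsto (fun y : ℝ => c * y ^ 2) atTop atTop :=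
        (tendsto_pow_atTop two_ne_zero).const_mul_atTop hc
      have := tendsto_neg_atTop_atBot.comp this
      simpa [Function.comp_def, neg_mul] using this
    simpa using this.const_mul (-(1/(2*c)))
  have hbot : Tendsto (fun y : ℝ => -(1/(2*c)) * Real.exp (-c * y ^ 2)) atBot (nhds 0) := by
    have : Tendsto (fun y : ℝ => Real.exp (-c * y ^ 2)) atBot (nhds 0) := by
      apply Real.tendsto_exp_atBot.comp
      have h2 : Tendsto (fun y : ℝ => c * y ^ 2) atBot atTop := by
        have h4 := ((tendsto_pow_atTop two_ne_zero).const_mul_atTop hc).comp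
          tendsto_neg_atBot_atTop
        exact h4.congr (by intro x; simp [Function.comp_def, neg_sq])
      have := tendsto_neg_atTop_atBot.comp h2
      simpa [Function.comp_def, neg_mul] using this
    simpa using this.const_mul (-(1/(2*c)))
  rw [MeasureTheory.integral_of_hasDerivAt_of_tendsto h1 hint hbot htop]
  simp

lemma integral_sq_mul_exp_neg_sq {c : ℝ} (hc : 0 < c) :
    ∫ x : ℝ, x ^ 2 * Real.exp (-c * x ^ 2) = (1/(2*c)) * Real.sqrt (π / c) := by
  have hu : ∀ x : ℝ, HasDerivAt (fun y : ℝ => y) 1 x := fun x => hasDerivAt_id x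
  have hv : ∀ x : ℝ, HasDerivAt (fun y : ℝ => -(1/(2*c)) * Real.exp (-c * y ^ 2))
      (x * Real.exp (-c * x ^ 2)) x := by
    intro x
    have h0 : HasDerivAt (fun y : ℝ => -c * y ^ 2) (-c * (2 * x)) x := by
      simpa using ((hasDerivAt_pow 2 x).const_mul (-c))
    have h := (h0.exp).const_mul (-(1/(2*c)))
    refine h.congr_deriv ?_
    field_simp
  have huv' : Integrable (fun x : ℝ => x * (x * Real.exp (-c * x ^ 2))) := by
    have := integrable_sq_mul_exp_neg_sq hc
    exact this.congr (by filter_upwards with x; ring)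
  have hu'v : Integrable (fun x : ℝ => 1 * (-(1/(2*c)) * Real.exp (-c * x ^ 2))) := by
    have := (integrable_exp_neg_mul_sq hc).const_mul (-(1/(2*c)))
    exact this.congr (by filter_upwards with x; ring)
  have h_top : Tendsto (fun x : ℝ => x * (-(1/(2*c)) * Real.exp (-c * x ^ 2))) atTop
      (nhds 0) := by
    have := (tendsto_mul_exp_neg_sq hc).const_mul (-(1/(2*c)))
    rw [mul_zero] at this
    exact this.congr (by intro x; ring)
  have h_bot : Tendsto (fun x : ℝ => x * (-(1/(2*c)) * Real.exp (-c * x ^ 2))) atBot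
      (nhds 0) := by
    have := (tendsto_mul_exp_neg_sq_atBot hc).const_mul (-(1/(2*c)))
    rw [mul_zero] at this
    exact this.congr (by intro x; ring)
  have key := MeasureTheory.integral_mul_deriv_eq_deriv_mul (a' := (0:ℝ)) (b' := (0:ℝ))
    (fun x _ => hu x) (fun x _ => hv x) huv' hu'v h_bot h_top
  have h2 : ∫ x : ℝ, x ^ 2 * Real.exp (-c * x ^ 2)
      = ∫ x : ℝ, x * (x * Real.exp (-c * x ^ 2)) := by
    congr 1; funext x; ring
  rw [h2, key]
  have h3 : ∫ x : ℝ, 1 * (-(1/(2*c)) * Real.exp (-c * x ^ 2))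
      = -(1/(2*c)) * ∫ x : ℝ, Real.exp (-c * x ^ 2) := by
    rw [← MeasureTheory.integral_const_mul]; congr 1; funext x; ring
  rw [h3, integral_gaussian]
  ring

lemma integrable_exp_half : Integrable (fun x : ℝ => Real.exp (-x ^ 2 / 2)) := by
  have := integrable_exp_neg_mul_sq (by norm_num : (0:ℝ) < 1/2)
  exact this.congr (by filter_upwards with x; ring_nf)

lemma integrable_mul_exp_half : Integrable (fun x : ℝ => x * Real.exp (-x ^ 2 / 2)) := by
  have := integrable_mul_exp_neg_mul_sq (by norm_num : (0:ℝ) < 1/2)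
  exact this.congr (by filter_upwards with x; ring_nf)

lemma integrable_sq_mul_exp_half : Integrable (fun x : ℝ => x ^ 2 * Real.exp (-x ^ 2 / 2)) := by
  have := integrable_sq_mul_exp_neg_sq (by norm_num : (0:ℝ) < 1/2)
  exact this.congr (by filter_upwards with x; ring_nf)

lemma tendsto_exp_half_atTop : Tendsto (fun x : ℝ => Real.exp (-x ^ 2 / 2)) atTop (nhds 0) := by
  apply Real.tendsto_exp_atBot.comp
  have h : Tendsto (fun y : ℝ => (1/2) * y ^ 2) atTop atTop :=
    (tendsto_pow_atTop two_ne_zero).const_mul_atTop (by norm_num)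
  have := tendsto_neg_atTop_atBot.comp h
  exact this.congr (by intro x; simp [Function.comp_def]; ring)

lemma tendsto_mul_exp_half_atTop :
    Tendsto (fun x : ℝ => x * Real.exp (-x ^ 2 / 2)) atTop (nhds 0) := by
  have := tendsto_mul_exp_neg_sq (by norm_num : (0:ℝ) < 1/2)
  exact this.congr (by intro x; ring_nf)

lemma B0 (α : ℝ) : ∫ w in Ioi (-α), Real.exp (-w ^ 2 / 2)
    = Real.sqrt (2 * π) * stdNormalCdf α := by
  have h1 : ∫ w in Ioi (-α), Real.exp (-w ^ 2 / 2)
      = ∫ w in Iic α, Real.exp (-w ^ 2 / 2) := by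
    have h := integral_comp_neg_Ioi (-α) (fun w => Real.exp (-w ^ 2 / 2))
    simp only [neg_neg, neg_sq] at h
    exact h
  rw [h1]
  unfold stdNormalCdf stdNormalPdf
  rw [MeasureTheory.integral_const_mul, ← mul_assoc, mul_inv_cancel₀, one_mul]
  positivity

lemma Phi_pos (α : ℝ) : 0 < stdNormalCdf α := by
  unfold stdNormalCdf
  have hint : IntegrableOn stdNormalPdf (Iic α) :=
    ((integrable_exp_half.const_mul ((Real.sqrt (2 * π))⁻¹)).congr
      (by filter_upwards with x; rfl)).integrableOn
  rw [MeasureTheory.setIntegral_pos_iff_support_of_nonneg_ae _ hint]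
  · have : Function.support stdNormalPdf = Set.univ := by
      ext x
      simp only [Function.mem_support, Set.mem_univ, iff_true]
      have : (0:ℝ) < stdNormalPdf x := by unfold stdNormalPdf; positivity
      exact ne_of_gt this
    rw [this, Set.univ_inter]
    simp
  · filter_upwards with x
    unfold stdNormalPdf
    positivity

lemma B1 (α : ℝ) : ∫ w in Ioi (-α), w * Real.exp (-w ^ 2 / 2) = Real.exp (-α ^ 2 / 2) := by
  have hderiv : ∀ x ∈ Ioi (-α), HasDerivAt (fun w : ℝ => -Real.exp (-w ^ 2 / 2))
      (x * Real.exp (-x ^ 2 / 2)) x := by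
    intro x _
    have h0 : HasDerivAt (fun w : ℝ => -w ^ 2 / 2) (-x) x := by
      have h := ((hasDerivAt_pow 2 x).const_mul (-(1:ℝ)/2))
      have : -x = -1/2 * (↑2 * x ^ (2-1)) := by norm_num; ring
      rw [this]
      exact h.congr_deriv rfl |>.congr_of_eventuallyEq
        (by filter_upwards with y; ring)
    have := (h0.exp).neg
    refine this.congr_deriv ?_
    ring
  have := integral_Ioi_of_hasDerivAt_of_tendsto
    (f := fun w : ℝ => -Real.exp (-w ^ 2 / 2)) (a := -α) (m := 0)
    ((Continuous.neg (by continuity)).continuousWithinAt) hderiv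
    (integrable_mul_exp_half.integrableOn)
    (by simpa using tendsto_exp_half_atTop.neg)
  rw [this]
  simp [neg_sq]

lemma B2 (α : ℝ) : ∫ w in Ioi (-α), w ^ 2 * Real.exp (-w ^ 2 / 2)
    = (∫ w in Ioi (-α), Real.exp (-w ^ 2 / 2)) - α * Real.exp (-α ^ 2 / 2) := by
  have hderiv : ∀ x ∈ Ioi (-α), HasDerivAt (fun w : ℝ => -(w * Real.exp (-w ^ 2 / 2)))
      (x ^ 2 * Real.exp (-x ^ 2 / 2) - Real.exp (-x ^ 2 / 2)) x := by
    intro x _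
    have h0 : HasDerivAt (fun w : ℝ => -w ^ 2 / 2) (-x) x := by
      have h := ((hasDerivAt_pow 2 x).const_mul (-(1:ℝ)/2))
      have : -x = -1/2 * (↑2 * x ^ (2-1)) := by norm_num; ring
      rw [this]
      exact h.congr_deriv rfl |>.congr_of_eventuallyEq
        (by filter_upwards with y; ring)
    have h1 := ((hasDerivAt_id x).mul (h0.exp)).neg
    refine h1.congr_deriv ?_
    simp only [id]
    ring
  have key := integral_Ioi_of_hasDerivAt_of_tendsto
    (f := fun w : ℝ => -(w * Real.exp (-w ^ 2 / 2))) (a := -α) (m := 0)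
    ((Continuous.neg (by continuity)).continuousWithinAt) hderiv
    ((integrable_sq_mul_exp_half.sub integrable_exp_half).integrableOn)
    (by simpa using tendsto_mul_exp_half_atTop.neg)
  have hsub : ∫ x in Ioi (-α), (x ^ 2 * Real.exp (-x ^ 2 / 2) - Real.exp (-x ^ 2 / 2))
      = (∫ x in Ioi (-α), x ^ 2 * Real.exp (-x ^ 2 / 2))
        - ∫ x in Ioi (-α), Real.exp (-x ^ 2 / 2) :=
    MeasureTheory.integral_sub integrable_sq_mul_exp_half.integrableOn
      integrable_exp_half.integrableOn
  rw [hsub] at key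
  simp only [neg_sq, neg_mul, neg_neg, zero_sub] at key
  linarith [key]

end Aux1D

section AuxStruct

lemma mgauss_eval (m : Fin 2 → ℝ) (V : Matrix (Fin 2) (Fin 2) ℝ)
    (hdet : V.det ≠ 0) (hsym : V 1 0 = V 0 1) (x y : ℝ) :
    mgauss m V ![x, y] = (Real.sqrt ((2 * π) ^ 2 * V.det))⁻¹ *
      Real.exp (-(1/2) * ((V 1 1 * (x - m 0) ^ 2 - 2 * V 0 1 * (x - m 0) * (y - m 1)
        + V 0 0 * (y - m 1) ^ 2) / V.det)) := by
  have hinv : V⁻¹ = V.det⁻¹ • !![V 1 1, -(V 0 1); -(V 1 0), V 0 0] := by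
    rw [Matrix.inv_def, Matrix.adjugate_fin_two, Ring.inverse_eq_inv]
  have hq : ((![x,y] - m) ⬝ᵥ (V⁻¹ *ᵥ (![x,y] - m)))
      = (V 1 1 * (x - m 0) ^ 2 - 2 * V 0 1 * (x - m 0) * (y - m 1)
        + V 0 0 * (y - m 1) ^ 2) / V.det := by
    rw [hinv]
    simp only [Matrix.smul_mulVec, Matrix.mulVec, dotProduct, Fin.sum_univ_two,
      Pi.sub_apply, Matrix.cons_val_zero, Matrix.cons_val_one, Matrix.head_cons,
      Pi.smul_apply, Matrix.smul_apply, smul_eq_mul, Matrix.of_apply, Matrix.cons_val', Matrix.head_fin_const,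
      Matrix.empty_val', Matrix.cons_val_fin_one]
    field_simp
    rw [hsym]
    ring
  unfold mgauss
  rw [hq]
  norm_num

lemma integral_comp_affine (A : Matrix (Fin 2) (Fin 2) ℝ) (b₀ : Fin 2 → ℝ)
    (hA : A.det ≠ 0) (g : (Fin 2 → ℝ) → ℝ) :
    ∫ f : Fin 2 → ℝ, g f = ∫ u : Fin 2 → ℝ, |A.det| * g (A *ᵥ u + b₀) := by
  classical
  set T : (Fin 2 → ℝ) → (Fin 2 → ℝ) := fun u => A *ᵥ u + b₀ with hT
  have hU : IsUnit A.det := isUnit_iff_ne_zero.mpr hA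
  set M : (Fin 2 → ℝ) →L[ℝ] (Fin 2 → ℝ) := LinearMap.toContinuousLinearMap (Matrix.toLin' A)
  have hMdet : M.det = A.det := by
    simp [M, ContinuousLinearMap.det, LinearMap.det_toLin']
  have hderiv : ∀ u ∈ (univ : Set (Fin 2 → ℝ)), HasFDerivWithinAt T M univ u := by
    intro u _
    apply HasFDerivAt.hasFDerivWithinAt
    have h1 : HasFDerivAt (fun u : Fin 2 → ℝ => M u) M u := M.hasFDerivAt
    have h2 := h1.add_const b₀
    refine h2.congr_of_eventuallyEq ?_
    filter_upwards with v
    simp [T, M, Matrix.toLin'_apply]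
  have hinj : InjOn T univ := by
    intro u _ v _ h
    have h2 : A *ᵥ u = A *ᵥ v := by
      have := congrArg (fun z => z - b₀) h
      simpa [T] using this
    have h3 := congrArg (fun z => A⁻¹ *ᵥ z) h2
    simpa only [Matrix.mulVec_mulVec, Matrix.nonsing_inv_mul A hU, Matrix.one_mulVec] using h3
  have hsurj : T '' univ = univ := by
    apply Set.eq_univ_of_forall
    intro y
    refine ⟨A⁻¹ *ᵥ (y - b₀), mem_univ _, ?_⟩
    simp only [T, Matrix.mulVec_mulVec, Matrix.mul_nonsing_inv A hU, Matrix.one_mulVec, sub_add_cancel]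
  have key := MeasureTheory.integral_image_eq_integral_abs_det_fderiv_smul
    (volume : Measure (Fin 2 → ℝ)) MeasurableSet.univ
    (f' := fun _ => M) hderiv hinj g
  rw [hsurj] at key
  simp only [Measure.restrict_univ, hMdet, smul_eq_mul] at key
  exact key

lemma integral_fin_two_prod (H : (Fin 2 → ℝ) → ℝ) :
    ∫ u : Fin 2 → ℝ, H u = ∫ p : ℝ × ℝ, H ![p.1, p.2] := by
  have h := ((volume_preserving_finTwoArrow ℝ).symm).integral_comp
    (MeasurableEquiv.finTwoArrow.symm).measurableEmbedding H
  rw [← h]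
  apply integral_congr_ae
  filter_upwards with p
  congr 1

end AuxStruct

section Expand
variable {F G : ℝ → ℝ} (q c0 : ℝ)
variable (hF0 : Integrable F) (hF1 : Integrable (fun t => t * F t))
  (hF2 : Integrable (fun t => t ^ 2 * F t))
  (hG0 : Integrable G) (hG1 : Integrable (fun w => w * G w))
  (hG2 : Integrable (fun w => w ^ 2 * G w))

lemma expand0 : ∫ p : ℝ × ℝ, F p.1 * G p.2 = (∫ t, F t) * (∫ w, G w) := by
  rw [MeasureTheory.Measure.volume_eq_prod, MeasureTheory.integral_prod_mul]

include hF0 hF1 hG0 hG1 in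
lemma expand1 : ∫ p : ℝ × ℝ, (p.1 + q * p.2 + c0) * (F p.1 * G p.2)
    = (∫ t, t * F t) * (∫ w, G w) + q * ((∫ t, F t) * (∫ w, w * G w))
      + c0 * ((∫ t, F t) * (∫ w, G w)) := by
  have j1 : Integrable (fun p : ℝ × ℝ => p.1 * F p.1 * G p.2) (volume.prod volume) :=
    hF1.mul_prod hG0
  have j2 : Integrable (fun p : ℝ × ℝ => q * (F p.1 * (p.2 * G p.2)))
      (volume.prod volume) := (hF0.mul_prod hG1).const_mul q
  have j3 : Integrable (fun p : ℝ × ℝ => c0 * (F p.1 * G p.2)) (volume.prod volume) :=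
    (hF0.mul_prod hG0).const_mul c0
  have e0 : ∫ p : ℝ × ℝ, (p.1 + q * p.2 + c0) * (F p.1 * G p.2)
      = ∫ p : ℝ × ℝ, (p.1 * F p.1 * G p.2 + q * (F p.1 * (p.2 * G p.2))
        + c0 * (F p.1 * G p.2)) := by
    congr 1; funext p; ring
  have eA : ∫ p : ℝ × ℝ, (p.1 * F p.1 * G p.2 + q * (F p.1 * (p.2 * G p.2))
        + c0 * (F p.1 * G p.2)) ∂(volume.prod volume)
      = (∫ p : ℝ × ℝ, p.1 * F p.1 * G p.2 ∂(volume.prod volume))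
        + (∫ p : ℝ × ℝ, q * (F p.1 * (p.2 * G p.2)) ∂(volume.prod volume))
        + (∫ p : ℝ × ℝ, c0 * (F p.1 * G p.2) ∂(volume.prod volume)) := by
    have a2 : ∫ p : ℝ × ℝ, (p.1 * F p.1 * G p.2 + q * (F p.1 * (p.2 * G p.2)))
          ∂(volume.prod volume)
        = (∫ p : ℝ × ℝ, p.1 * F p.1 * G p.2 ∂(volume.prod volume))
          + (∫ p : ℝ × ℝ, q * (F p.1 * (p.2 * G p.2)) ∂(volume.prod volume)) :=
      MeasureTheory.integral_add j1 j2
    have a3 : ∫ p : ℝ × ℝ, (p.1 * F p.1 * G p.2 + q * (F p.1 * (p.2 * G p.2))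
          + c0 * (F p.1 * G p.2)) ∂(volume.prod volume)
        = (∫ p : ℝ × ℝ, (p.1 * F p.1 * G p.2 + q * (F p.1 * (p.2 * G p.2)))
            ∂(volume.prod volume))
          + (∫ p : ℝ × ℝ, c0 * (F p.1 * G p.2) ∂(volume.prod volume)) :=
      MeasureTheory.integral_add (j1.add j2) j3
    rw [a3, a2]
  have p1 : ∫ p : ℝ × ℝ, p.1 * F p.1 * G p.2 ∂(volume.prod volume)
      = (∫ t, t * F t) * (∫ w, G w) := MeasureTheory.integral_prod_mul (fun t => t * F t) G
  have p2 : ∫ p : ℝ × ℝ, F p.1 * (p.2 * G p.2) ∂(volume.prod volume)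
      = (∫ t, F t) * (∫ w, w * G w) := MeasureTheory.integral_prod_mul F (fun w => w * G w)
  have p3 : ∫ p : ℝ × ℝ, F p.1 * G p.2 ∂(volume.prod volume)
      = (∫ t, F t) * (∫ w, G w) := MeasureTheory.integral_prod_mul F G
  rw [MeasureTheory.Measure.volume_eq_prod] at *
  rw [e0, eA, MeasureTheory.integral_const_mul, MeasureTheory.integral_const_mul, p1, p2, p3]

include hF0 hF1 hF2 hG0 hG1 hG2 in
lemma expand2 : ∫ p : ℝ × ℝ, (p.1 + q * p.2 + c0) ^ 2 * (F p.1 * G p.2)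
    = (∫ t, t ^ 2 * F t) * (∫ w, G w) + q ^ 2 * ((∫ t, F t) * (∫ w, w ^ 2 * G w))
      + c0 ^ 2 * ((∫ t, F t) * (∫ w, G w))
      + 2 * q * ((∫ t, t * F t) * (∫ w, w * G w))
      + 2 * c0 * ((∫ t, t * F t) * (∫ w, G w))
      + 2 * c0 * q * ((∫ t, F t) * (∫ w, w * G w)) := by
  have j1 : Integrable (fun p : ℝ × ℝ => p.1 ^ 2 * F p.1 * G p.2) (volume.prod volume) :=
    hF2.mul_prod hG0
  have j2 : Integrable (fun p : ℝ × ℝ => q ^ 2 * (F p.1 * (p.2 ^ 2 * G p.2)))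
      (volume.prod volume) := (hF0.mul_prod hG2).const_mul (q ^ 2)
  have j3 : Integrable (fun p : ℝ × ℝ => c0 ^ 2 * (F p.1 * G p.2)) (volume.prod volume) :=
    (hF0.mul_prod hG0).const_mul (c0 ^ 2)
  have j4 : Integrable (fun p : ℝ × ℝ => 2 * q * (p.1 * F p.1 * (p.2 * G p.2)))
      (volume.prod volume) := (hF1.mul_prod hG1).const_mul (2 * q)
  have j5 : Integrable (fun p : ℝ × ℝ => 2 * c0 * (p.1 * F p.1 * G p.2))
      (volume.prod volume) := (hF1.mul_prod hG0).const_mul (2 * c0)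
  have j6 : Integrable (fun p : ℝ × ℝ => 2 * c0 * q * (F p.1 * (p.2 * G p.2)))
      (volume.prod volume) := (hF0.mul_prod hG1).const_mul (2 * c0 * q)
  have e0 : ∫ p : ℝ × ℝ, (p.1 + q * p.2 + c0) ^ 2 * (F p.1 * G p.2)
      = ∫ p : ℝ × ℝ, (p.1 ^ 2 * F p.1 * G p.2 + q ^ 2 * (F p.1 * (p.2 ^ 2 * G p.2))
        + c0 ^ 2 * (F p.1 * G p.2) + 2 * q * (p.1 * F p.1 * (p.2 * G p.2))
        + 2 * c0 * (p.1 * F p.1 * G p.2) + 2 * c0 * q * (F p.1 * (p.2 * G p.2))) := by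
    congr 1; funext p; ring
  have eA : ∫ p : ℝ × ℝ, (p.1 ^ 2 * F p.1 * G p.2 + q ^ 2 * (F p.1 * (p.2 ^ 2 * G p.2))
        + c0 ^ 2 * (F p.1 * G p.2) + 2 * q * (p.1 * F p.1 * (p.2 * G p.2))
        + 2 * c0 * (p.1 * F p.1 * G p.2) + 2 * c0 * q * (F p.1 * (p.2 * G p.2)))
          ∂(volume.prod volume)
      = (∫ p : ℝ × ℝ, p.1 ^ 2 * F p.1 * G p.2 ∂(volume.prod volume))
        + (∫ p : ℝ × ℝ, q ^ 2 * (F p.1 * (p.2 ^ 2 * G p.2)) ∂(volume.prod volume))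
        + (∫ p : ℝ × ℝ, c0 ^ 2 * (F p.1 * G p.2) ∂(volume.prod volume))
        + (∫ p : ℝ × ℝ, 2 * q * (p.1 * F p.1 * (p.2 * G p.2)) ∂(volume.prod volume))
        + (∫ p : ℝ × ℝ, 2 * c0 * (p.1 * F p.1 * G p.2) ∂(volume.prod volume))
        + (∫ p : ℝ × ℝ, 2 * c0 * q * (F p.1 * (p.2 * G p.2)) ∂(volume.prod volume)) := by
    have b2 : ∫ p : ℝ × ℝ, (p.1 ^ 2 * F p.1 * G p.2 + q ^ 2 * (F p.1 * (p.2 ^ 2 * G p.2))) ∂(volume.prod volume)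
        = (∫ p : ℝ × ℝ, (p.1 ^ 2 * F p.1 * G p.2) ∂(volume.prod volume))
          + (∫ p : ℝ × ℝ, q ^ 2 * (F p.1 * (p.2 ^ 2 * G p.2)) ∂(volume.prod volume)) :=
      MeasureTheory.integral_add j1 j2
    have b3 : ∫ p : ℝ × ℝ, (p.1 ^ 2 * F p.1 * G p.2 + q ^ 2 * (F p.1 * (p.2 ^ 2 * G p.2)) + c0 ^ 2 * (F p.1 * G p.2)) ∂(volume.prod volume)
        = (∫ p : ℝ × ℝ, (p.1 ^ 2 * F p.1 * G p.2 + q ^ 2 * (F p.1 * (p.2 ^ 2 * G p.2))) ∂(volume.prod volume))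
          + (∫ p : ℝ × ℝ, c0 ^ 2 * (F p.1 * G p.2) ∂(volume.prod volume)) :=
      MeasureTheory.integral_add (j1.add j2) j3
    have b4 : ∫ p : ℝ × ℝ, (p.1 ^ 2 * F p.1 * G p.2 + q ^ 2 * (F p.1 * (p.2 ^ 2 * G p.2)) + c0 ^ 2 * (F p.1 * G p.2) + 2 * q * (p.1 * F p.1 * (p.2 * G p.2))) ∂(volume.prod volume)
        = (∫ p : ℝ × ℝ, (p.1 ^ 2 * F p.1 * G p.2 + q ^ 2 * (F p.1 * (p.2 ^ 2 * G p.2)) + c0 ^ 2 * (F p.1 * G p.2)) ∂(volume.prod volume))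
          + (∫ p : ℝ × ℝ, 2 * q * (p.1 * F p.1 * (p.2 * G p.2)) ∂(volume.prod volume)) :=
      MeasureTheory.integral_add ((j1.add j2).add j3) j4
    have b5 : ∫ p : ℝ × ℝ, (p.1 ^ 2 * F p.1 * G p.2 + q ^ 2 * (F p.1 * (p.2 ^ 2 * G p.2)) + c0 ^ 2 * (F p.1 * G p.2) + 2 * q * (p.1 * F p.1 * (p.2 * G p.2)) + 2 * c0 * (p.1 * F p.1 * G p.2)) ∂(volume.prod volume)
        = (∫ p : ℝ × ℝ, (p.1 ^ 2 * F p.1 * G p.2 + q ^ 2 * (F p.1 * (p.2 ^ 2 * G p.2)) + c0 ^ 2 * (F p.1 * G p.2) + 2 * q * (p.1 * F p.1 * (p.2 * G p.2))) ∂(volume.prod volume))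
          + (∫ p : ℝ × ℝ, 2 * c0 * (p.1 * F p.1 * G p.2) ∂(volume.prod volume)) :=
      MeasureTheory.integral_add (((j1.add j2).add j3).add j4) j5
    have b6 : ∫ p : ℝ × ℝ, (p.1 ^ 2 * F p.1 * G p.2 + q ^ 2 * (F p.1 * (p.2 ^ 2 * G p.2)) + c0 ^ 2 * (F p.1 * G p.2) + 2 * q * (p.1 * F p.1 * (p.2 * G p.2)) + 2 * c0 * (p.1 * F p.1 * G p.2) + 2 * c0 * q * (F p.1 * (p.2 * G p.2))) ∂(volume.prod volume)
        = (∫ p : ℝ × ℝ, (p.1 ^ 2 * F p.1 * G p.2 + q ^ 2 * (F p.1 * (p.2 ^ 2 * G p.2)) + c0 ^ 2 * (F p.1 * G p.2) + 2 * q * (p.1 * F p.1 * (p.2 * G p.2)) + 2 * c0 * (p.1 * F p.1 * G p.2)) ∂(volume.prod volume))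
          + (∫ p : ℝ × ℝ, 2 * c0 * q * (F p.1 * (p.2 * G p.2)) ∂(volume.prod volume)) :=
      MeasureTheory.integral_add ((((j1.add j2).add j3).add j4).add j5) j6
    rw [b6, b5, b4, b3, b2]
  have p1 : ∫ p : ℝ × ℝ, p.1 ^ 2 * F p.1 * G p.2 ∂(volume.prod volume)
      = (∫ t, t ^ 2 * F t) * (∫ w, G w) :=
    MeasureTheory.integral_prod_mul (fun t => t ^ 2 * F t) G
  have p2 : ∫ p : ℝ × ℝ, F p.1 * (p.2 ^ 2 * G p.2) ∂(volume.prod volume)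
      = (∫ t, F t) * (∫ w, w ^ 2 * G w) :=
    MeasureTheory.integral_prod_mul F (fun w => w ^ 2 * G w)
  have p3 : ∫ p : ℝ × ℝ, F p.1 * G p.2 ∂(volume.prod volume)
      = (∫ t, F t) * (∫ w, G w) := MeasureTheory.integral_prod_mul F G
  have p4 : ∫ p : ℝ × ℝ, p.1 * F p.1 * (p.2 * G p.2) ∂(volume.prod volume)
      = (∫ t, t * F t) * (∫ w, w * G w) :=
    MeasureTheory.integral_prod_mul (fun t => t * F t) (fun w => w * G w)
  have p5 : ∫ p : ℝ × ℝ, p.1 * F p.1 * G p.2 ∂(volume.prod volume)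
      = (∫ t, t * F t) * (∫ w, G w) := MeasureTheory.integral_prod_mul (fun t => t * F t) G
  have p6 : ∫ p : ℝ × ℝ, F p.1 * (p.2 * G p.2) ∂(volume.prod volume)
      = (∫ t, F t) * (∫ w, w * G w) := MeasureTheory.integral_prod_mul F (fun w => w * G w)
  rw [MeasureTheory.Measure.volume_eq_prod] at *
  rw [e0, eA, MeasureTheory.integral_const_mul, MeasureTheory.integral_const_mul,
    MeasureTheory.integral_const_mul, MeasureTheory.integral_const_mul,
    MeasureTheory.integral_const_mul, p1, p2, p3, p4, p5, p6]

end Expand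

/-- Variance of `f₁` conditional on the event `{f₁ < f₂}` for a bivariate
Gaussian `f ~ N(m, V)`: it equals
`V₁₁ - s⁻¹ β (β + α) (V₁₁ - V₁₂)²` with `s = V₁₁ - 2V₁₂ + V₂₂`,
`μ = m₂ - m₁`, `α = μ/√s`, `β = φ(α)/Φ(α)`. -/
theorem truncated_bivariate_gaussian_conditional_variance
    (m : Fin 2 → ℝ) (V : Matrix (Fin 2) (Fin 2) ℝ) (hV : V.PosDef) :
    let ρ : (Fin 2 → ℝ) → ℝ := fun f => if f 0 < f 1 then mgauss m V f else 0
    let Z : ℝ := ∫ f : Fin 2 → ℝ, ρ f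
    let s : ℝ := V 0 0 - 2 * V 0 1 + V 1 1
    let μ : ℝ := m 1 - m 0
    let α : ℝ := μ / Real.sqrt s
    let β : ℝ := stdNormalPdf α / stdNormalCdf α
    (Z⁻¹ * ∫ f : Fin 2 → ℝ, (f 0) ^ 2 * ρ f) -
        (Z⁻¹ * ∫ f : Fin 2 → ℝ, f 0 * ρ f) ^ 2 =
      V 0 0 - s⁻¹ * β * (β + α) * (V 0 0 - V 0 1) ^ 2 := by
  intro ρ Z s μ α β
  classical
  have hsym : V 1 0 = V 0 1 := by
    have h := congrFun (congrFun hV.1 1) 0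
    simpa [Matrix.conjTranspose_apply] using h.symm
  have hdet0 : 0 < V.det := hV.det_pos
  have hs0 : (0:ℝ) < s := by
    simp only [s]
    have h := (Matrix.posDef_iff_dotProduct_mulVec.mp hV).2 (x := ![-1, 1]) (by
      intro h
      have := congrFun h 1
      simp at this)
    simp [dotProduct, Matrix.mulVec, Fin.sum_univ_two, hsym] at h
    linarith
  set σ : ℝ := Real.sqrt s with hσdef
  have hσ0 : 0 < σ := Real.sqrt_pos.mpr hs0
  have hσ2 : σ ^ 2 = s := Real.sq_sqrt hs0.le
  set q : ℝ := (V 0 1 - V 0 0) / σ with hqdef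
  set k : ℝ := s / V.det with hkdef
  have hk0 : 0 < k := div_pos hs0 hdet0
  set Nc : ℝ := (Real.sqrt ((2 * π) ^ 2 * V.det))⁻¹ with hNcdef
  have hNc0 : 0 < Nc := by
    rw [hNcdef]
    have : (0:ℝ) < (2 * π) ^ 2 * V.det := by positivity
    positivity
  set A : Matrix (Fin 2) (Fin 2) ℝ := !![1, q; 1, q + σ] with hAdef
  set b₀ : Fin 2 → ℝ := ![m 0, m 1] with hb₀def
  have hAdet : A.det = σ := by
    rw [hAdef]
    simp [Matrix.det_fin_two_of]
  set F : ℝ → ℝ := fun t => Real.exp (-(k/2) * t ^ 2) with hFdef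
  set G : ℝ → ℝ := Set.indicator (Ioi (-α)) (fun w => Real.exp (-w ^ 2 / 2)) with hGdef
  have hvec : ∀ t w : ℝ, A *ᵥ ![t, w] + b₀ = ![t + q * w + m 0, t + (q + σ) * w + m 1] := by
    intro t w
    funext i
    fin_cases i <;>
      simp [hAdef, hb₀def, Matrix.mulVec, dotProduct, Fin.sum_univ_two] <;> ring
  have hpoint : ∀ t w : ℝ, ρ (A *ᵥ ![t, w] + b₀) = Nc * (F t * G w) := by
    intro t w
    have hρ : ρ (A *ᵥ ![t, w] + b₀)
        = if (A *ᵥ ![t, w] + b₀) 0 < (A *ᵥ ![t, w] + b₀) 1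
            then mgauss m V (A *ᵥ ![t, w] + b₀) else 0 := rfl
    rw [hρ, hvec t w]
    have h0 : (![t + q * w + m 0, t + (q + σ) * w + m 1] : Fin 2 → ℝ) 0
        = t + q * w + m 0 := rfl
    have h1 : (![t + q * w + m 0, t + (q + σ) * w + m 1] : Fin 2 → ℝ) 1
        = t + (q + σ) * w + m 1 := rfl
    rw [h0, h1]
    have hcond : (t + q * w + m 0 < t + (q + σ) * w + m 1) ↔ w ∈ Ioi (-α) := by
      rw [Set.mem_Ioi, show -α = (-μ)/σ by rw [neg_div], div_lt_iff₀ hσ0]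
      simp only [μ]
      constructor <;> intro h <;> nlinarith
    by_cases hc : w ∈ Ioi (-α)
    · rw [if_pos (hcond.mpr hc), hGdef, Set.indicator_of_mem hc]
      rw [mgauss_eval m V (ne_of_gt hdet0) hsym]
      rw [hNcdef, hFdef]
      congr 1
      rw [← Real.exp_add]
      congr 1
      have hx : t + q * w + m 0 - m 0 = t + q * w := by ring
      have hy : t + (q + σ) * w + m 1 - m 1 = t + (q + σ) * w := by ring
      rw [hx, hy]
      have hd' : V 1 1 = σ ^ 2 + 2 * V 0 1 - V 0 0 := by
        have h5 : s = V 0 0 - 2 * V 0 1 + V 1 1 := rfl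
        rw [← hσ2] at h5
        linarith
      have hdet' : V.det = V 0 0 * V 1 1 - V 0 1 * V 1 0 := Matrix.det_fin_two V
      rw [hsym] at hdet'
      have hk : k = s / V.det := rfl
      rw [hk, ← hσ2]
      rw [hd'] at hdet' ⊢
      have hσne : σ ≠ 0 := ne_of_gt hσ0
      have hdetne : V.det ≠ 0 := ne_of_gt hdet0
      rw [hdet']
      have hdetne' : V 0 0 * (σ ^ 2 + 2 * V 0 1 - V 0 0) - V 0 1 * V 0 1 ≠ 0 := by
        rw [← hdet']; exact hdetne
      rw [hqdef]
      have hD2 : V 0 0 * (σ ^ 2 + 2 * V 0 1 - V 0 0) - V 0 1 ^ 2 ≠ 0 := by rw [pow_two (V 0 1)]; exact hdetne'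
      field_simp
      ring
    · rw [if_neg (fun hlt => hc (hcond.mp hlt)), hGdef, Set.indicator_of_notMem hc]
      simp
  have master : ∀ g : (Fin 2 → ℝ) → ℝ,
      (∫ f, g f) = ∫ p : ℝ × ℝ, σ * g (A *ᵥ ![p.1, p.2] + b₀) := by
    intro g
    rw [integral_comp_affine A b₀ (by rw [hAdet]; exact ne_of_gt hσ0) g,
      integral_fin_two_prod (fun u => |A.det| * g (A *ᵥ u + b₀))]
    simp only [hAdet, abs_of_pos hσ0]
  have hk20 : (0:ℝ) < k / 2 := by linarith
  have hF0 : Integrable F := integrable_exp_neg_mul_sq hk20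
  have hF1 : Integrable (fun t => t * F t) := integrable_mul_exp_neg_mul_sq hk20
  have hF2 : Integrable (fun t => t ^ 2 * F t) := integrable_sq_mul_exp_neg_sq hk20
  have hmeas : MeasurableSet (Ioi (-α)) := measurableSet_Ioi
  have hG0 : Integrable G := by
    rw [hGdef, integrable_indicator_iff hmeas]
    exact integrable_exp_half.integrableOn
  have hGw1 : (fun w => w * G w)
      = Set.indicator (Ioi (-α)) (fun w => w * Real.exp (-w ^ 2 / 2)) := by
    funext w
    rw [hGdef]
    by_cases h : w ∈ Ioi (-α)
    · rw [Set.indicator_of_mem h, Set.indicator_of_mem h]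
    · rw [Set.indicator_of_notMem h, Set.indicator_of_notMem h, mul_zero]
  have hGw2 : (fun w => w ^ 2 * G w)
      = Set.indicator (Ioi (-α)) (fun w => w ^ 2 * Real.exp (-w ^ 2 / 2)) := by
    funext w
    rw [hGdef]
    by_cases h : w ∈ Ioi (-α)
    · rw [Set.indicator_of_mem h, Set.indicator_of_mem h]
    · rw [Set.indicator_of_notMem h, Set.indicator_of_notMem h, mul_zero]
  have hG1 : Integrable (fun w => w * G w) := by
    rw [hGw1, integrable_indicator_iff hmeas]
    exact integrable_mul_exp_half.integrableOn
  have hG2 : Integrable (fun w => w ^ 2 * G w) := by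
    rw [hGw2, integrable_indicator_iff hmeas]
    exact integrable_sq_mul_exp_half.integrableOn
  -- one-dimensional values
  have vF0 : ∫ t, F t = Real.sqrt (π / (k/2)) := integral_gaussian (k/2)
  have vF0pos : 0 < ∫ t, F t := by
    rw [vF0]
    apply Real.sqrt_pos.mpr
    positivity
  have vF1 : ∫ t, t * F t = 0 := integral_mul_exp_neg_sq hk20
  have vF2 : ∫ t, t ^ 2 * F t = (1/k) * ∫ t, F t := by
    rw [vF0]
    have h := integral_sq_mul_exp_neg_sq hk20
    rw [show (1:ℝ)/(2*(k/2)) = 1/k by field_simp] at h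
    exact h
  have hexpPdf : Real.exp (-α ^ 2 / 2) = Real.sqrt (2 * π) * stdNormalPdf α := by
    unfold stdNormalPdf
    rw [← mul_assoc, mul_inv_cancel₀ (by positivity), one_mul]
  have vG0 : ∫ w, G w = Real.sqrt (2 * π) * stdNormalCdf α := by
    rw [hGdef, MeasureTheory.integral_indicator hmeas]
    exact B0 α
  have hΦ0 : 0 < stdNormalCdf α := Phi_pos α
  have vG0pos : 0 < ∫ w, G w := by
    rw [vG0]
    have h2π : (0:ℝ) < Real.sqrt (2 * π) := Real.sqrt_pos.mpr (by positivity)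
    exact mul_pos h2π hΦ0
  have vG1 : ∫ w, w * G w = Real.sqrt (2 * π) * stdNormalPdf α := by
    rw [hGw1, MeasureTheory.integral_indicator hmeas, B1 α, hexpPdf]
  have vG2 : ∫ w, w ^ 2 * G w
      = (∫ w, G w) - α * (Real.sqrt (2 * π) * stdNormalPdf α) := by
    rw [hGw2, MeasureTheory.integral_indicator hmeas, B2 α, hexpPdf,
      hGdef, MeasureTheory.integral_indicator hmeas]
  -- the three Gaussian integrals
  have hZ : Z = (σ * Nc) * ((∫ t, F t) * (∫ w, G w)) := by
    have h1 : Z = ∫ f, ρ f := rfl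
    rw [h1, master ρ]
    calc ∫ p : ℝ × ℝ, σ * ρ (A *ᵥ ![p.1, p.2] + b₀)
        = ∫ p : ℝ × ℝ, (σ * Nc) * (F p.1 * G p.2) := by
          congr 1; funext p; rw [hpoint p.1 p.2]; ring
      _ = (σ * Nc) * ∫ p : ℝ × ℝ, F p.1 * G p.2 := MeasureTheory.integral_const_mul _ _
      _ = (σ * Nc) * ((∫ t, F t) * (∫ w, G w)) := by rw [expand0]
  have hE1 : (∫ f : Fin 2 → ℝ, f 0 * ρ f)
      = (σ * Nc) * (q * ((∫ t, F t) * (∫ w, w * G w))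
          + m 0 * ((∫ t, F t) * (∫ w, G w))) := by
    rw [master (fun f => f 0 * ρ f)]
    calc ∫ p : ℝ × ℝ, σ * ((fun f : Fin 2 → ℝ => f 0 * ρ f) (A *ᵥ ![p.1, p.2] + b₀))
        = ∫ p : ℝ × ℝ, (σ * Nc) * ((p.1 + q * p.2 + m 0) * (F p.1 * G p.2)) := by
          congr 1; funext p
          have hval : (A *ᵥ ![p.1, p.2] + b₀) 0 = p.1 + q * p.2 + m 0 := by
            rw [hvec p.1 p.2]; rfl
          show σ * ((A *ᵥ ![p.1, p.2] + b₀) 0 * ρ (A *ᵥ ![p.1, p.2] + b₀)) = _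
          rw [hval, hpoint p.1 p.2]; ring
      _ = (σ * Nc) * ∫ p : ℝ × ℝ, (p.1 + q * p.2 + m 0) * (F p.1 * G p.2) :=
          MeasureTheory.integral_const_mul _ _
      _ = (σ * Nc) * (q * ((∫ t, F t) * (∫ w, w * G w))
            + m 0 * ((∫ t, F t) * (∫ w, G w))) := by
          rw [expand1 q (m 0) hF0 hF1 hG0 hG1, vF1]; ring
  have hE2 : (∫ f : Fin 2 → ℝ, (f 0) ^ 2 * ρ f)
      = (σ * Nc) * ((1/k) * ((∫ t, F t) * (∫ w, G w))
          + q ^ 2 * ((∫ t, F t) * (∫ w, w ^ 2 * G w))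
          + m 0 ^ 2 * ((∫ t, F t) * (∫ w, G w))
          + 2 * m 0 * q * ((∫ t, F t) * (∫ w, w * G w))) := by
    rw [master (fun f => (f 0) ^ 2 * ρ f)]
    calc ∫ p : ℝ × ℝ, σ * ((fun f : Fin 2 → ℝ => (f 0) ^ 2 * ρ f) (A *ᵥ ![p.1, p.2] + b₀))
        = ∫ p : ℝ × ℝ, (σ * Nc) * ((p.1 + q * p.2 + m 0) ^ 2 * (F p.1 * G p.2)) := by
          congr 1; funext p
          have hval : (A *ᵥ ![p.1, p.2] + b₀) 0 = p.1 + q * p.2 + m 0 := by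
            rw [hvec p.1 p.2]; rfl
          show σ * ((A *ᵥ ![p.1, p.2] + b₀) 0 ^ 2 * ρ (A *ᵥ ![p.1, p.2] + b₀)) = _
          rw [hval, hpoint p.1 p.2]; ring
      _ = (σ * Nc) * ∫ p : ℝ × ℝ, (p.1 + q * p.2 + m 0) ^ 2 * (F p.1 * G p.2) :=
          MeasureTheory.integral_const_mul _ _
      _ = _ := by
          rw [expand2 q (m 0) hF0 hF1 hF2 hG0 hG1 hG2, vF1, vF2]; ring
  -- final algebra
  have hβ : β = stdNormalPdf α / stdNormalCdf α := rfl
  have hXne : σ * Nc ≠ 0 := by positivity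
  have hPne : (∫ t, F t) ≠ 0 := ne_of_gt vF0pos
  have hQne : (∫ w, G w) ≠ 0 := ne_of_gt vG0pos
  have hΦne : stdNormalCdf α ≠ 0 := ne_of_gt hΦ0
  have h2πne : Real.sqrt (2 * π) ≠ 0 := by positivity
  have hM : Z⁻¹ * (∫ f : Fin 2 → ℝ, f 0 * ρ f) = m 0 + q * β := by
    rw [hZ, hE1, hβ, vG1, vG0]
    field_simp
    ring
  have hS : Z⁻¹ * (∫ f : Fin 2 → ℝ, (f 0) ^ 2 * ρ f)
      = 1/k + q ^ 2 * (1 - α * β) + m 0 ^ 2 + 2 * m 0 * q * β := by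
    rw [hZ, hE2, hβ, vG2, vG1, vG0]
    field_simp
  rw [hS, hM, hβ]
  have hsne : s ≠ 0 := ne_of_gt hs0
  have f1 : q ^ 2 = (V 0 0 - V 0 1) ^ 2 / s := by
    rw [hqdef, div_pow, hσ2]
    congr 1
    ring
  have f2 : 1/k + q ^ 2 = V 0 0 := by
    have hdet' : V.det = V 0 0 * V 1 1 - V 0 1 * V 1 0 := Matrix.det_fin_two V
    rw [hsym] at hdet'
    have hsval : s = V 0 0 - 2 * V 0 1 + V 1 1 := rfl
    rw [hkdef, hqdef, div_pow, hσ2]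
    rw [one_div_div]
    rw [hdet', hsval]
    have hsne' : V 0 0 - 2 * V 0 1 + V 1 1 ≠ 0 := by rw [← hsval]; exact hsne
    have hsne'' : V 0 0 - V 0 1 * 2 + V 1 1 ≠ 0 := by contrapose! hsne'; linarith
    field_simp
    ring
  set βv := stdNormalPdf α / stdNormalCdf α with hβv
  linear_combination f2 - βv * (βv + α) * f1
end
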